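/- If f : ℂ → ℂ is K-quasiconformal (in the analytic sense, with Beltrami coefficient bounded by (K−1)/(K+1)) and in particular if f is a real-linear map with dilatation K, then for any family Γ of curves, mod(f(Γ)) ≤ K · mod(Γ). -/

import Mathlib

open MeasureTheory

/-- Line integral of a density `ρ` along a curve `γ : ℝ → ℂ` parametrized on `[0,1]`. -/
noncomputable def curveIntegral' (ρ : ℂ → ℝ) (γ : ℝ → ℂ) : ℝ :=
  ∫ t in (0:ℝ)..1, ρ (γ t) * ‖deriv γ t‖

/-- `ρ` is an allowable (admissible) metric for the curve family `Γ`. -/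
def Allowable (ρ : ℂ → ℝ) (Γ : Set (ℝ → ℂ)) : Prop :=
  Measurable ρ ∧ (∀ z, 0 ≤ ρ z) ∧ ∀ γ ∈ Γ, 1 ≤ curveIntegral' ρ γ

/-- The modulus of a curve family. -/
noncomputable def modulus (Γ : Set (ℝ → ℂ)) : ENNReal :=
  ⨅ (ρ : ℂ → ℝ) (_ : Allowable ρ Γ), ∫⁻ z : ℂ, ENNReal.ofReal (ρ z ^ 2)


lemma deriv_linearEquiv_comp (f : ℂ ≃ₗ[ℝ] ℂ) (γ : ℝ → ℂ) (t : ℝ) :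
    deriv ((f : ℂ → ℂ) ∘ γ) t = f (deriv γ t) := by
  by_cases h : DifferentiableAt ℝ γ t
  · exact ((f.toContinuousLinearEquiv : ℂ →L[ℝ] ℂ).hasFDerivAt.comp_hasDerivAt t
      h.hasDerivAt).deriv
  · have h2 : ¬ DifferentiableAt ℝ ((f : ℂ → ℂ) ∘ γ) t := by
      intro h2
      have : DifferentiableAt ℝ ((f.symm : ℂ → ℂ) ∘ ((f : ℂ → ℂ) ∘ γ)) t :=
        (f.symm.toContinuousLinearEquiv : ℂ →L[ℝ] ℂ).differentiableAt.comp t h2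
      simp only [Function.comp_def, f.symm_apply_apply] at this
      exact h this
    rw [deriv_zero_of_not_differentiableAt h, deriv_zero_of_not_differentiableAt h2, map_zero]

/-- Quasi-invariance of the modulus under an invertible real-linear map of `ℂ` with
singular values `σ₁ ≥ σ₂ > 0` (characterized by the bounds `σ₂‖z‖ ≤ ‖f z‖ ≤ σ₁‖z‖`
together with `σ₁σ₂ = |det f|`): `mod(f(Γ)) ≤ K · mod(Γ)` with `K = σ₁/σ₂`. -/
theorem modulus_quasi_invariance (f : ℂ ≃ₗ[ℝ] ℂ) (σ₁ σ₂ : ℝ)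
    (hσ₂ : 0 < σ₂) (hσ : σ₂ ≤ σ₁)
    (hupper : ∀ z : ℂ, ‖f z‖ ≤ σ₁ * ‖z‖)
    (hlower : ∀ z : ℂ, σ₂ * ‖z‖ ≤ ‖f z‖)
    (hdet : σ₁ * σ₂ = |LinearMap.det (f : ℂ →ₗ[ℝ] ℂ)|)
    (Γ : Set (ℝ → ℂ)) :
    modulus ((fun γ : ℝ → ℂ => (f : ℂ → ℂ) ∘ γ) '' Γ)
      ≤ ENNReal.ofReal (σ₁ / σ₂) * modulus Γ := by
  have hσ₁ : 0 < σ₁ := lt_of_lt_of_le hσ₂ hσ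
  have hcont : Continuous (f : ℂ → ℂ) := f.toLinearMap.continuous_of_finiteDimensional
  have hconts : Continuous (f.symm : ℂ → ℂ) := f.symm.toLinearMap.continuous_of_finiteDimensional
  -- reduce to: for every allowable ρ, modulus (f Γ) ≤ K * ∫⁻ ρ²
  have hK0 : (ENNReal.ofReal (σ₁ / σ₂)) ≠ 0 := by
    simp only [ne_eq, ENNReal.ofReal_eq_zero, not_le]; positivity
  have hrhs : ENNReal.ofReal (σ₁ / σ₂) * modulus Γ =
      ⨅ (ρ : ℂ → ℝ) (_ : Allowable ρ Γ),
        ENNReal.ofReal (σ₁ / σ₂) * ∫⁻ z : ℂ, ENNReal.ofReal (ρ z ^ 2) := by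
    rw [modulus, ENNReal.mul_iInf_of_ne hK0 ENNReal.ofReal_ne_top]
    exact iInf_congr fun ρ => ENNReal.mul_iInf_of_ne hK0 ENNReal.ofReal_ne_top
  rw [hrhs]
  refine le_iInf fun ρ => le_iInf fun hρ => ?_
  obtain ⟨hmeas, hnonneg, hadm⟩ := hρ
  -- the transported density
  set ρ' : ℂ → ℝ := fun w => σ₂⁻¹ * ρ (f.symm w) with hρ'
  have hρ'meas : Measurable ρ' := (hmeas.comp hconts.measurable).const_mul _
  have hρ'nonneg : ∀ w, 0 ≤ ρ' w := fun w =>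
    mul_nonneg (inv_nonneg.2 hσ₂.le) (hnonneg _)
  -- admissibility of ρ' for f(Γ)
  have hadm' : ∀ γ' ∈ (fun γ : ℝ → ℂ => (f : ℂ → ℂ) ∘ γ) '' Γ, 1 ≤ curveIntegral' ρ' γ' := by
    rintro _ ⟨γ, hγ, rfl⟩
    have h1 : 1 ≤ curveIntegral' ρ γ := hadm γ hγ
    -- h := original integrand, g := new integrand
    set h : ℝ → ℝ := fun t => ρ (γ t) * ‖deriv γ t‖ with hh
    set g : ℝ → ℝ := fun t => ρ' (((f : ℂ → ℂ)) (γ t)) * ‖deriv ((f : ℂ → ℂ) ∘ γ) t‖ with hg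
    have hgval : ∀ t, g t = σ₂⁻¹ * ρ (γ t) * ‖f (deriv γ t)‖ := by
      intro t
      simp [hg, hρ', deriv_linearEquiv_comp f γ t, f.symm_apply_apply, mul_assoc]
    have hhg : ∀ t, h t ≤ g t := by
      intro t
      rw [hgval t]
      have := hlower (deriv γ t)
      calc ρ (γ t) * ‖deriv γ t‖ = σ₂⁻¹ * ρ (γ t) * (σ₂ * ‖deriv γ t‖) := by
            field_simp
        _ ≤ σ₂⁻¹ * ρ (γ t) * ‖f (deriv γ t)‖ :=
            mul_le_mul_of_nonneg_left this (mul_nonneg (inv_nonneg.2 hσ₂.le) (hnonneg _))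
    have hgK : ∀ t, g t ≤ (σ₁ / σ₂) * h t := by
      intro t
      rw [hgval t]
      calc σ₂⁻¹ * ρ (γ t) * ‖f (deriv γ t)‖ ≤ σ₂⁻¹ * ρ (γ t) * (σ₁ * ‖deriv γ t‖) :=
            mul_le_mul_of_nonneg_left (hupper _) (mul_nonneg (inv_nonneg.2 hσ₂.le) (hnonneg _))
        _ = (σ₁ / σ₂) * h t := by rw [hh]; field_simp
    -- integrability of h (from 1 ≤ ∫ h)
    have hInt : IntervalIntegrable h volume 0 1 := by
      by_contra hc
      rw [curveIntegral', intervalIntegral.integral_undef hc]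
        at h1
      linarith
    -- a.e. measurability of g : g = h * ψ ∘ deriv γ
    have hψ : Measurable fun v : ℂ => ‖f v‖ / (σ₂ * ‖v‖) :=
      (hcont.measurable.norm).div ((measurable_const.mul measurable_norm))
    have hgfac : ∀ t, g t = h t * ((fun v : ℂ => ‖f v‖ / (σ₂ * ‖v‖)) (deriv γ t)) := by
      intro t
      rw [hgval t, hh]
      dsimp only
      rcases eq_or_ne (deriv γ t) 0 with h0 | h0
      · simp [h0]
      · have hB : ‖deriv γ t‖ ≠ 0 := norm_ne_zero_iff.2 h0
        rw [div_eq_mul_inv, mul_inv]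
        calc σ₂⁻¹ * ρ (γ t) * ‖f (deriv γ t)‖
            = ρ (γ t) * ‖f (deriv γ t)‖ * σ₂⁻¹ * (‖deriv γ t‖ * ‖deriv γ t‖⁻¹) := by
              rw [mul_inv_cancel₀ hB, mul_one]; ring
          _ = ρ (γ t) * ‖deriv γ t‖ * (‖f (deriv γ t)‖ * (σ₂⁻¹ * ‖deriv γ t‖⁻¹)) := by ring
    have hgm : AEStronglyMeasurable g (volume.restrict (Set.uIoc (0:ℝ) 1)) := by
      have hha : AEStronglyMeasurable h (volume.restrict (Set.uIoc (0:ℝ) 1)) :=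
        hInt.def'.aestronglyMeasurable
      have : AEStronglyMeasurable
          (fun t => h t * ((fun v : ℂ => ‖f v‖ / (σ₂ * ‖v‖)) (deriv γ t)))
          (volume.restrict (Set.uIoc (0:ℝ) 1)) :=
        hha.mul ((hψ.comp (measurable_deriv γ)).aestronglyMeasurable)
      exact this.congr (Filter.Eventually.of_forall fun t => (hgfac t).symm)
    have hgInt : IntervalIntegrable g volume 0 1 := by
      rw [intervalIntegrable_iff] at hInt ⊢
      refine (hInt.const_mul (σ₁ / σ₂)).mono hgm ?_
      refine Filter.Eventually.of_forall fun t => ?_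
      have hh0 : 0 ≤ h t := mul_nonneg (hnonneg _) (norm_nonneg _)
      have hg0 : 0 ≤ g t := le_trans hh0 (hhg t)
      rw [Real.norm_of_nonneg hg0, Real.norm_of_nonneg (by positivity)]
      exact hgK t
    calc (1:ℝ) ≤ curveIntegral' ρ γ := h1
      _ ≤ curveIntegral' ρ' ((f : ℂ → ℂ) ∘ γ) := by
          exact intervalIntegral.integral_mono_on zero_le_one hInt hgInt fun t _ => hhg t
  -- now the area bound
  refine le_trans (iInf₂_le ρ' ⟨hρ'meas, hρ'nonneg, hadm'⟩) ?_
  -- change of variables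
  have hdet0 : LinearMap.det (f.symm : ℂ →ₗ[ℝ] ℂ) ≠ 0 := by
    exact LinearEquiv.isUnit_det' f.symm |>.ne_zero
  have hmap : Measure.map (f.symm : ℂ → ℂ) volume =
      ENNReal.ofReal |(LinearMap.det (f.symm : ℂ →ₗ[ℝ] ℂ))⁻¹| • volume :=
    Measure.map_linearMap_addHaar_eq_smul_addHaar volume hdet0
  have hdet2 : |(LinearMap.det (f.symm : ℂ →ₗ[ℝ] ℂ))⁻¹| = σ₁ * σ₂ := by
    rw [← LinearEquiv.coe_det, LinearEquiv.det_symm, map_inv, Units.val_inv_eq_inv_val, inv_inv, LinearEquiv.coe_det, hdet]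
  have hFmeas : Measurable fun w : ℂ => ENNReal.ofReal (ρ w ^ 2) :=
    (hmeas.pow_const 2).ennreal_ofReal
  refine le_of_eq ?_
  calc ∫⁻ z : ℂ, ENNReal.ofReal (ρ' z ^ 2)
      = ∫⁻ z : ℂ, ENNReal.ofReal (σ₂⁻¹ ^ 2) * ENNReal.ofReal (ρ (f.symm z) ^ 2) := by
        congr 1; funext z; rw [hρ']; dsimp only
        rw [mul_pow, ENNReal.ofReal_mul (by positivity)]
    _ = ENNReal.ofReal (σ₂⁻¹ ^ 2) * ∫⁻ z : ℂ, ENNReal.ofReal (ρ (f.symm z) ^ 2) :=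
        lintegral_const_mul _ (hFmeas.comp hconts.measurable)
    _ = ENNReal.ofReal (σ₂⁻¹ ^ 2) *
        ∫⁻ w : ℂ, ENNReal.ofReal (ρ w ^ 2) ∂(Measure.map (f.symm : ℂ → ℂ) volume) := by
        rw [lintegral_map hFmeas hconts.measurable]
    _ = ENNReal.ofReal (σ₂⁻¹ ^ 2) *
        (ENNReal.ofReal (σ₁ * σ₂) * ∫⁻ w : ℂ, ENNReal.ofReal (ρ w ^ 2)) := by
        rw [hmap, hdet2, lintegral_smul_measure, smul_eq_mul]
    _ = ENNReal.ofReal (σ₁ / σ₂) * ∫⁻ w : ℂ, ENNReal.ofReal (ρ w ^ 2) := by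
        rw [← mul_assoc, ← ENNReal.ofReal_mul (by positivity)]
        congr 2
        field_simp
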